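/- For 7/4 ≤ a ≤ 19/4, let ρ₃(a) be the 6×6 matrix (1/(8a+2)) · [[3a+1,0,0,0,2a−1,0],[0,a,0,0,0,2a−1],[0,0,0,0,0,0],[0,0,0,0,0,0],[2a−1,0,0,0,a,0],[0,2a−1,0,0,0,3a+1]]. Then ρ₃(a) is a 2⊗3 state and it violates the inequality D ≥ N², i.e., D(ρ₃(a)) < N(ρ₃(a))². -/

import Mathlib

open Matrix BigOperators Polynomial
open scoped Kronecker ComplexOrder

noncomputable section

/-- Squared Hilbert–Schmidt norm `‖C‖² = Tr(CᴴC)`. -/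
def hsNormSq {d : Type*} [Fintype d] (C : Matrix d d ℂ) : ℝ :=
  (Matrix.trace (Cᴴ * C)).re

/-- Trace norm `‖X‖₁ = Tr √(XᴴX)`. -/
def traceNorm {d : Type*} [Fintype d] [DecidableEq d] (X : Matrix d d ℂ) : ℝ :=
  (((Matrix.posSemidef_conjTranspose_mul_self X).1.eigenvectorUnitary.1 *
      diagonal (((↑) : ℝ → ℂ) ∘ (√·) ∘ (Matrix.posSemidef_conjTranspose_mul_self X).1.eigenvalues) *
      (star (Matrix.posSemidef_conjTranspose_mul_self X).1.eigenvectorUnitary : Matrix d d ℂ)).trace).re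

/-- Partial transpose on the first factor: `ρ^Γ((i,k),(j,l)) = ρ((j,k),(i,l))`. -/
def ptranspose {m n : ℕ} (ρ : Matrix (Fin m × Fin n) (Fin m × Fin n) ℂ) :
    Matrix (Fin m × Fin n) (Fin m × Fin n) ℂ :=
  Matrix.of fun p q => ρ (q.1, p.2) (p.1, q.2)

/-- Negativity `N(ρ) = (‖ρ^Γ‖₁ - 1)/(m-1)`. -/
def negativity {m n : ℕ} (ρ : Matrix (Fin m × Fin n) (Fin m × Fin n) ℂ) : ℝ :=
  (traceNorm (ptranspose ρ) - 1) / ((m : ℝ) - 1)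

/-- `ψ` is an orthonormal basis of `ℂ^m` (an orthonormal family of `m` vectors). -/
def IsONB {m : ℕ} (ψ : Fin m → (Fin m → ℂ)) : Prop :=
  ∀ k l, (∑ i, star (ψ k i) * ψ l i) = if k = l then 1 else 0

/-- The rank-one projector `|v⟩⟨v|`. -/
def proj {m : ℕ} (v : Fin m → ℂ) : Matrix (Fin m) (Fin m) ℂ :=
  Matrix.vecMulVec v (fun j => star (v j))

/-- The von Neumann measurement map
`Π^A(ρ) = ∑ k, (|ψ_k⟩⟨ψ_k| ⊗ I_n) ρ (|ψ_k⟩⟨ψ_k| ⊗ I_n)`. -/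
def piA {m n : ℕ} (ψ : Fin m → (Fin m → ℂ))
    (ρ : Matrix (Fin m × Fin n) (Fin m × Fin n) ℂ) :
    Matrix (Fin m × Fin n) (Fin m × Fin n) ℂ :=
  ∑ k, (proj (ψ k) ⊗ₖ (1 : Matrix (Fin n) (Fin n) ℂ)) * ρ *
       (proj (ψ k) ⊗ₖ (1 : Matrix (Fin n) (Fin n) ℂ))

/-- Geometric discord
`D(ρ) = (m/(m-1)) · inf over von Neumann measurements of ‖ρ - Π^A(ρ)‖²`. -/
def gd {m n : ℕ} (ρ : Matrix (Fin m × Fin n) (Fin m × Fin n) ℂ) : ℝ :=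
  ((m : ℝ) / ((m : ℝ) - 1)) *
    ⨅ ψ : {ψ : Fin m → (Fin m → ℂ) // IsONB ψ}, hsNormSq (ρ - piA ψ.1 ρ)

/-- An `m ⊗ n` state: positive semidefinite with trace one. -/
def IsState {m n : ℕ} (ρ : Matrix (Fin m × Fin n) (Fin m × Fin n) ℂ) : Prop :=
  ρ.PosSemidef ∧ ρ.trace = 1

/-- Reindex a `6 × 6` matrix by `Fin 2 × Fin 3` with the ordering
`(1,1),(1,2),(1,3),(2,1),(2,2),(2,3)`. -/
def ofM6 (M : Matrix (Fin 6) (Fin 6) ℂ) :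
    Matrix (Fin 2 × Fin 3) (Fin 2 × Fin 3) ℂ :=
  Matrix.of fun p q =>
    M ⟨p.1.val * 3 + p.2.val, by have := p.1.isLt; have := p.2.isLt; omega⟩
      ⟨q.1.val * 3 + q.2.val, by have := q.1.isLt; have := q.2.isLt; omega⟩

/-- The family of states `ρ₁(a,b)`. -/
def rho1 (a b : ℝ) : Matrix (Fin 2 × Fin 3) (Fin 2 × Fin 3) ℂ :=
  ofM6 ((1 / (2 * ((a : ℂ)^2 + (b : ℂ)^2))) •
    !![(a:ℂ)^2, 0, 0, 0, (a:ℂ)*(b:ℂ), 0;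
       0, (b:ℂ)^2, 0, 0, 0, (a:ℂ)*(b:ℂ);
       0, 0, 0, 0, 0, 0;
       0, 0, 0, 0, 0, 0;
       (a:ℂ)*(b:ℂ), 0, 0, 0, (b:ℂ)^2, 0;
       0, (a:ℂ)*(b:ℂ), 0, 0, 0, (a:ℂ)^2])

/-- A matrix supported on the pair of indices `u, v`, with block `[[p,q],[q,r]]`. -/
def Mblk {d : Type*} [DecidableEq d] (u v : d) (p q r : ℝ) : Matrix d d ℂ :=
  Matrix.of fun i j =>
    if i = u then (if j = u then (p:ℂ) else if j = v then (q:ℂ) else 0)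
    else if i = v then (if j = u then (q:ℂ) else if j = v then (r:ℂ) else 0)
    else 0

lemma sum_pair {d : Type*} [Fintype d] [DecidableEq d] (u v : d) (h : u ≠ v) (A B : ℂ) :
    (∑ j, (if j = u then A else if j = v then B else 0)) = A + B := by
  have hf : ∀ j, (if j = u then A else if j = v then B else 0)
      = (if j = u then A else 0) + (if j = v then B else 0) := by
    intro j; by_cases h1 : j = u <;> by_cases h2 : j = v <;> simp_all
  simp [hf, Finset.sum_add_distrib, Finset.sum_ite_eq']

lemma blockPSD {d : Type*} [Fintype d] [DecidableEq d] (u v : d) (huv : u ≠ v)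
    (p q r : ℝ) (hp : 0 ≤ p) (hr : 0 ≤ r) (hq : q^2 ≤ p*r) :
    Matrix.PosSemidef (Mblk u v p q r) := by
  rw [Matrix.posSemidef_iff_dotProduct_mulVec]
  constructor
  · ext i j
    simp only [Mblk, Matrix.conjTranspose_apply, Matrix.of_apply]
    by_cases h1 : i = u <;> by_cases h2 : i = v <;> by_cases h3 : j = u <;>
      by_cases h4 : j = v <;> simp_all [Complex.conj_ofReal]
  · intro x
    have hMv : ∀ i, (Mblk u v p q r *ᵥ x) i =
        if i = u then ((p:ℂ) * x u + q * x v) else if i = v then ((q:ℂ) * x u + r * x v) else 0 := by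
      intro i
      simp only [Matrix.mulVec, dotProduct, Mblk, Matrix.of_apply]
      by_cases h1 : i = u
      · have step : ∀ j ∈ Finset.univ, ((if i = u then (if j = u then (p:ℂ) else if j = v then (q:ℂ) else 0)
            else if i = v then (if j = u then (q:ℂ) else if j = v then (r:ℂ) else 0) else 0) * x j)
            = (if j = u then (p:ℂ) * x u else if j = v then (q:ℂ) * x v else 0) := by
          intro j _; by_cases h3 : j = u <;> by_cases h4 : j = v <;> simp_all
        rw [Finset.sum_congr rfl step, sum_pair u v huv]
        simp [h1]
      · by_cases h2 : i = v
        · have step : ∀ j ∈ Finset.univ, ((if i = u then (if j = u then (p:ℂ) else if j = v then (q:ℂ) else 0)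
              else if i = v then (if j = u then (q:ℂ) else if j = v then (r:ℂ) else 0) else 0) * x j)
              = (if j = u then (q:ℂ) * x u else if j = v then (r:ℂ) * x v else 0) := by
            intro j _; by_cases h3 : j = u <;> by_cases h4 : j = v <;> simp_all
          rw [Finset.sum_congr rfl step, sum_pair u v huv]
          simp [h1, h2, Ne.symm huv]
        · have step : ∀ j ∈ Finset.univ, ((if i = u then (if j = u then (p:ℂ) else if j = v then (q:ℂ) else 0)
              else if i = v then (if j = u then (q:ℂ) else if j = v then (r:ℂ) else 0) else 0) * x j) = 0 := by
            intro j _; simp [h1, h2]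
          rw [Finset.sum_congr rfl step]
          simp [h1, h2]
    have hdot : star x ⬝ᵥ (Mblk u v p q r *ᵥ x) =
        (starRingEnd ℂ) (x u) * ((p:ℂ) * x u + q * x v)
        + (starRingEnd ℂ) (x v) * ((q:ℂ) * x u + r * x v) := by
      simp only [dotProduct, Pi.star_apply, hMv]
      have step : ∀ i ∈ Finset.univ, (star (x i) * (if i = u then ((p:ℂ) * x u + q * x v)
          else if i = v then ((q:ℂ) * x u + r * x v) else 0))
          = (if i = u then (starRingEnd ℂ) (x u) * ((p:ℂ) * x u + q * x v)
             else if i = v then (starRingEnd ℂ) (x v) * ((q:ℂ) * x u + r * x v) else 0) := by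
        intro i _; by_cases h1 : i = u <;> by_cases h2 : i = v <;> simp_all [RCLike.star_def]
      rw [Finset.sum_congr rfl step, sum_pair u v huv]
    rw [hdot]
    set e := (x u).re; set f := (x u).im; set g := (x v).re; set h := (x v).im
    rw [Complex.le_def]
    constructor
    · simp only [Complex.add_re, Complex.mul_re, Complex.mul_im, Complex.add_im,
        Complex.conj_re, Complex.conj_im, Complex.ofReal_re, Complex.ofReal_im, Complex.zero_re]
      by_cases hp0 : p = 0
      · have hq0 : q = 0 := by nlinarith [sq_nonneg q]
        subst hp0 hq0; nlinarith [sq_nonneg g, sq_nonneg h]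
      · have hp' : 0 < p := lt_of_le_of_ne hp (Ne.symm hp0)
        nlinarith [sq_nonneg (p*e + q*g), sq_nonneg (p*f + q*h), sq_nonneg g, sq_nonneg h,
          mul_nonneg (mul_nonneg hp hr) (sq_nonneg g),
          mul_nonneg (sub_nonneg.2 hq) (add_nonneg (sq_nonneg g) (sq_nonneg h))]
    · simp only [Complex.add_im, Complex.mul_re, Complex.mul_im, Complex.add_re,
        Complex.conj_re, Complex.conj_im, Complex.ofReal_re, Complex.ofReal_im, Complex.zero_im]
      ring

lemma Mblk_herm {d : Type*} [DecidableEq d] (u v : d) (p q r : ℝ) :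
    (Mblk u v p q r)ᴴ = Mblk u v p q r := by
  ext i j
  simp only [Mblk, Matrix.conjTranspose_apply, Matrix.of_apply]
  by_cases h1 : i = u <;> by_cases h2 : i = v <;> by_cases h3 : j = u <;>
    by_cases h4 : j = v <;> simp_all [Complex.conj_ofReal]

lemma hsNormSq_nonneg' {d : Type*} [Fintype d] (C : Matrix d d ℂ) :
    0 ≤ (Matrix.trace (Cᴴ * C)).re := by
  simp only [Matrix.trace, Matrix.diag, Matrix.mul_apply, Matrix.conjTranspose_apply,
    Complex.re_sum]
  apply Finset.sum_nonneg; intro i _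
  apply Finset.sum_nonneg; intro j _
  simp [RCLike.star_def, Complex.mul_re, Complex.conj_re, Complex.conj_im]
  nlinarith [sq_nonneg (C j i).re, sq_nonneg (C j i).im]

open scoped MatrixOrder in
lemma traceNorm_eq_of_sq {d : Type*} [Fintype d] [DecidableEq d] (X S : Matrix d d ℂ)
    (hS : S.PosSemidef) (h : S^2 = Xᴴ * X) : traceNorm X = S.trace.re := by
  have hA := Matrix.posSemidef_conjTranspose_mul_self X
  have h1 : CFC.sqrt (Xᴴ * X) = S := CFC.sqrt_unique (by rw [← h, pow_two]) hS.nonneg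
  have h2 := CFC.sqrt_eq_real_sqrt (Xᴴ * X) hA.nonneg
  rw [cfcₙ_eq_cfc, hA.1.cfc_eq, h1] at h2
  unfold traceNorm
  rw [h2]
  rfl

set_option maxHeartbeats 1000000 in
lemma piA_std (ρ : Matrix (Fin 2 × Fin 3) (Fin 2 × Fin 3) ℂ) :
    piA (fun k i => if k = i then 1 else 0) ρ
      = Matrix.of fun p q => if p.1 = q.1 then ρ p q else 0 := by
  ext ⟨i,k⟩ ⟨j,l⟩
  fin_cases i <;> fin_cases k <;> fin_cases j <;> fin_cases l <;>
    simp [piA, proj, Matrix.mul_apply, Matrix.kroneckerMap_apply, Matrix.vecMulVec_apply,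
      Matrix.one_apply, Fintype.sum_prod_type, Fin.sum_univ_succ]

set_option maxHeartbeats 4000000 in
theorem stmt15 (a : ℝ) (ha0 : 7/4 ≤ a) (ha1 : a ≤ 19/4)
    (ρ : Matrix (Fin 2 × Fin 3) (Fin 2 × Fin 3) ℂ)
    (hρ : ρ = ofM6 ((1 / (8 * (a : ℂ) + 2)) •
      !![3*(a:ℂ)+1, 0, 0, 0, 2*(a:ℂ)-1, 0;
         0, (a:ℂ), 0, 0, 0, 2*(a:ℂ)-1;
         0, 0, 0, 0, 0, 0;
         0, 0, 0, 0, 0, 0;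
         2*(a:ℂ)-1, 0, 0, 0, (a:ℂ), 0;
         0, 2*(a:ℂ)-1, 0, 0, 0, 3*(a:ℂ)+1])) :
    IsState ρ ∧ gd ρ < negativity ρ ^ 2 := by
  have hdR : (0:ℝ) < 8*a+2 := by nlinarith
  have hd : (8*(a:ℂ)+2) ≠ 0 := by
    intro h
    have : (8*a+2 : ℝ) = 0 := by exact_mod_cast congrArg Complex.re h
    nlinarith
  obtain ⟨P, hPdef⟩ : ∃ P : ℝ, P = (3*a+1)/(8*a+2) := ⟨_, rfl⟩
  obtain ⟨Q, hQdef⟩ : ∃ Q : ℝ, Q = (2*a-1)/(8*a+2) := ⟨_, rfl⟩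
  obtain ⟨R, hRdef⟩ : ∃ R : ℝ, R = a/(8*a+2) := ⟨_, rfl⟩
  have hP0 : 0 < P := by rw [hPdef]; positivity
  have hQ0 : 0 < Q := by rw [hQdef]; apply div_pos; nlinarith; exact hdR
  have hR0 : 0 < R := by rw [hRdef]; apply div_pos; nlinarith; exact hdR
  obtain ⟨s, hsdef⟩ : ∃ s : ℝ, s = Real.sqrt (R^2 + 4*Q^2) := ⟨_, rfl⟩
  have hs0 : 0 < s := by
    rw [hsdef]; apply Real.sqrt_pos.2; positivity
  have hs2 : s^2 = R^2 + 4*Q^2 := by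
    rw [hsdef]; apply Real.sq_sqrt; positivity
  have hs0' : s ≠ 0 := ne_of_gt hs0
  obtain ⟨p₁, hp1def⟩ : ∃ x : ℝ, x = (R^2 + 2*Q^2)/s := ⟨_, rfl⟩
  obtain ⟨q₁, hq1def⟩ : ∃ x : ℝ, x = R*Q/s := ⟨_, rfl⟩
  obtain ⟨r₁, hr1def⟩ : ∃ x : ℝ, x = 2*Q^2/s := ⟨_, rfl⟩
  have hp₁0 : 0 ≤ p₁ := by rw [hp1def]; positivity
  have hr₁0 : 0 ≤ r₁ := by rw [hr1def]; positivity
  have hI : p₁^2 + q₁^2 = R^2 + Q^2 := by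
    rw [hp1def, hq1def]; field_simp; linear_combination (-(R^2+Q^2)) * hs2
  have hII : q₁*p₁ + r₁*q₁ = R*Q := by
    rw [hp1def, hq1def, hr1def]; field_simp; linear_combination -hs2
  have hIII : q₁^2 + r₁^2 = Q^2 := by
    rw [hq1def, hr1def]; field_simp; linear_combination -hs2
  have hIV : p₁ + r₁ = s := by
    rw [hp1def, hr1def]; field_simp; linear_combination -hs2
  have hVq : q₁^2 ≤ p₁ * r₁ := by
    rw [hp1def, hq1def, hr1def, div_pow, div_mul_div_comm, ← pow_two,
      div_le_div_iff₀ (by positivity) (by positivity)]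
    nlinarith [mul_nonneg (mul_nonneg (sq_nonneg R) (sq_nonneg Q)) (sq_nonneg s), mul_nonneg (mul_nonneg (sq_nonneg Q) (sq_nonneg Q)) (sq_nonneg s)]
  have hVq' : q₁^2 ≤ r₁ * p₁ := by rw [mul_comm]; exact hVq
  have haa : 0 ≤ (a - 7/4) * (19/4 - a) := by nlinarith
  have hPR : Q^2 ≤ P * R := by
    rw [hPdef, hQdef, hRdef, div_pow, div_mul_div_comm, ← pow_two,
      div_le_div_iff₀ (by positivity) (by positivity)]
    nlinarith [sq_nonneg (8*a+2)]
  have hRP : Q^2 ≤ R * P := by rw [mul_comm]; exact hPR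
  -- block decomposition of ρ
  have hρeq : ρ = Mblk ((0:Fin 2),(0:Fin 3)) ((1:Fin 2),(1:Fin 3)) P Q R
      + Mblk ((0:Fin 2),(1:Fin 3)) ((1:Fin 2),(2:Fin 3)) R Q P := by
    rw [hρ]
    ext ⟨i,k⟩ ⟨j,l⟩
    fin_cases i <;> fin_cases k <;> fin_cases j <;> fin_cases l <;>
      (simp only [ofM6, Mblk, Matrix.of_apply, Matrix.add_apply, Matrix.smul_apply,
        Prod.mk.injEq] <;> norm_num [hPdef, hQdef, hRdef] <;> (push_cast; field_simp) <;> simp)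
  have hρPSD : ρ.PosSemidef := by
    rw [hρeq]
    exact (blockPSD _ _ (by decide) _ _ _ hP0.le hR0.le hPR).add
      (blockPSD _ _ (by decide) _ _ _ hR0.le hP0.le hRP)
  have hρtr : ρ.trace = 1 := by
    rw [hρeq]
    simp only [Matrix.trace, Matrix.diag, Fintype.sum_prod_type, Fin.sum_univ_succ,
      Mblk, Matrix.add_apply, Matrix.of_apply, Finset.sum_empty, Fin.sum_univ_zero,
      Prod.mk.injEq]
    norm_num [hPdef, hRdef, Fin.ext_iff]
    push_cast
    field_simp
    ring
  -- partial transpose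
  have hXeq : ptranspose ρ = Mblk ((0:Fin 2),(1:Fin 3)) ((1:Fin 2),(0:Fin 3)) R Q 0
      + Mblk ((0:Fin 2),(2:Fin 3)) ((1:Fin 2),(1:Fin 3)) 0 Q R
      + Mblk ((0:Fin 2),(0:Fin 3)) ((1:Fin 2),(1:Fin 3)) P 0 0
      + Mblk ((1:Fin 2),(2:Fin 3)) ((0:Fin 2),(0:Fin 3)) P 0 0 := by
    rw [hρ]
    ext ⟨i,k⟩ ⟨j,l⟩
    fin_cases i <;> fin_cases k <;> fin_cases j <;> fin_cases l <;>
      (simp only [ptranspose, ofM6, Mblk, Matrix.of_apply, Matrix.add_apply, Matrix.smul_apply,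
        Prod.mk.injEq] <;> norm_num [hPdef, hQdef, hRdef] <;> (push_cast; field_simp) <;> simp)
  have hXH : (ptranspose ρ)ᴴ = ptranspose ρ := by
    rw [hXeq]
    simp only [Matrix.conjTranspose_add, Mblk_herm]
  -- the absolute value matrix S
  obtain ⟨S, hSdef⟩ : ∃ S : Matrix (Fin 2 × Fin 3) (Fin 2 × Fin 3) ℂ,
      S = Mblk ((0:Fin 2),(1:Fin 3)) ((1:Fin 2),(0:Fin 3)) p₁ q₁ r₁
      + Mblk ((0:Fin 2),(2:Fin 3)) ((1:Fin 2),(1:Fin 3)) r₁ q₁ p₁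
      + Mblk ((0:Fin 2),(0:Fin 3)) ((1:Fin 2),(0:Fin 3)) P 0 0
      + Mblk ((1:Fin 2),(2:Fin 3)) ((0:Fin 2),(0:Fin 3)) P 0 0 := ⟨_, rfl⟩
  have hSpsd : S.PosSemidef := by
    rw [hSdef]
    exact (((blockPSD _ _ (by decide) _ _ _ hp₁0 hr₁0 hVq).add
      (blockPSD _ _ (by decide) _ _ _ hr₁0 hp₁0 hVq')).add
      (blockPSD _ _ (by decide) _ _ _ hP0.le le_rfl (by nlinarith))).add
      (blockPSD _ _ (by decide) _ _ _ hP0.le le_rfl (by nlinarith))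
  have hIC : (p₁:ℂ)^2 + (q₁:ℂ)^2 = (R:ℂ)^2 + (Q:ℂ)^2 := by exact_mod_cast hI
  have hIIC : (q₁:ℂ)*(p₁:ℂ) + (r₁:ℂ)*(q₁:ℂ) = (R:ℂ)*(Q:ℂ) := by exact_mod_cast hII
  have hIIIC : (q₁:ℂ)^2 + (r₁:ℂ)^2 = (Q:ℂ)^2 := by exact_mod_cast hIII
  have hS2 : S^2 = (ptranspose ρ)ᴴ * (ptranspose ρ) := by
    rw [hXH, pow_two, hSdef, hXeq]
    ext ⟨i,k⟩ ⟨j,l⟩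
    fin_cases i <;> fin_cases k <;> fin_cases j <;> fin_cases l <;>
      (simp only [Matrix.mul_apply, Matrix.add_apply, Mblk, Matrix.of_apply,
        Fintype.sum_prod_type, Fin.sum_univ_succ, Finset.sum_empty, Fin.sum_univ_zero,
        Prod.mk.injEq] <;> norm_num [Fin.ext_iff] <;>
        first
          | ring1
          | linear_combination hIC
          | linear_combination hIIC
          | linear_combination hIIIC
          | linear_combination -hIC
          | linear_combination -hIIC
          | linear_combination -hIIIC)
  have hsqrt := traceNorm_eq_of_sq _ S hSpsd hS2
  have htrace : traceNorm (ptranspose ρ) = 2*P + 2*s := by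
    rw [hsqrt, hSdef]
    simp only [Matrix.trace, Matrix.diag, Fintype.sum_prod_type, Fin.sum_univ_succ,
      Mblk, Matrix.add_apply, Matrix.of_apply, Finset.sum_empty, Fin.sum_univ_zero,
      Prod.mk.injEq]
    norm_num [Fin.ext_iff]
    linarith [hIV]
  have hneg : negativity ρ = 2*P + 2*s - 1 := by
    unfold negativity
    rw [htrace]
    norm_num
  -- geometric discord bound
  have hONB : IsONB (fun (k i : Fin 2) => if k = i then (1:ℂ) else 0) := by
    intro k l
    fin_cases k <;> fin_cases l <;> simp [Fin.sum_univ_succ]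
  have hΔ : ρ - piA (fun k i => if k = i then (1:ℂ) else 0) ρ
      = Mblk ((0:Fin 2),(0:Fin 3)) ((1:Fin 2),(1:Fin 3)) 0 Q 0
      + Mblk ((0:Fin 2),(1:Fin 3)) ((1:Fin 2),(2:Fin 3)) 0 Q 0 := by
    rw [piA_std, hρeq]
    ext ⟨i,k⟩ ⟨j,l⟩
    fin_cases i <;> fin_cases k <;> fin_cases j <;> fin_cases l <;>
      (simp only [Matrix.sub_apply, Matrix.add_apply, Mblk, Matrix.of_apply,
        Prod.mk.injEq] <;> norm_num [Fin.ext_iff])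
  have hhs : hsNormSq (ρ - piA (fun k i => if k = i then (1:ℂ) else 0) ρ) = 4*Q^2 := by
    rw [hΔ]
    unfold hsNormSq
    simp only [Matrix.trace, Matrix.diag, Matrix.mul_apply, Matrix.conjTranspose_apply,
      Matrix.add_apply, Mblk, Matrix.of_apply, Fintype.sum_prod_type, Fin.sum_univ_succ,
      Finset.sum_empty, Fin.sum_univ_zero, Prod.mk.injEq]
    norm_num [Complex.conj_ofReal, Fin.ext_iff]
    push_cast
    ring
  have hbdd : BddBelow (Set.range (fun ψ : {ψ : Fin 2 → (Fin 2 → ℂ) // IsONB ψ} =>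
      hsNormSq (ρ - piA ψ.1 ρ))) := by
    refine ⟨0, ?_⟩
    rintro y ⟨ψ, rfl⟩
    exact hsNormSq_nonneg' _
  have hinf : (⨅ ψ : {ψ : Fin 2 → (Fin 2 → ℂ) // IsONB ψ}, hsNormSq (ρ - piA ψ.1 ρ)) ≤ 4*Q^2 := by
    have := ciInf_le hbdd (⟨fun k i => if k = i then (1:ℂ) else 0, hONB⟩ :
      {ψ : Fin 2 → (Fin 2 → ℂ) // IsONB ψ})
    rwa [hhs] at this
  have hgd : gd ρ ≤ 8*Q^2 := by
    unfold gd
    push_cast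
    norm_num
    linarith [hinf]
  -- final inequality
  have hQR : 2*R^2 < Q^2 := by
    have hQ2 : Q^2 = (2*a-1)^2/((8*a+2)^2) := by rw [hQdef, div_pow]
    have hR2 : R^2 = a^2/((8*a+2)^2) := by rw [hRdef, div_pow]
    have hd2 : (0:ℝ) < (8*a+2)^2 := by positivity
    rw [hQ2, hR2, mul_div_assoc', div_lt_div_iff₀ hd2 hd2]
    nlinarith [mul_lt_mul_of_pos_right (show 2*a^2 < (2*a-1)^2 by nlinarith) hd2]
  have h2P : 2*P - 1 = -(2*R) := by
    rw [hPdef, hRdef]; field_simp; ring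
  have hy : (0:ℝ) < R^2 + Q^2 := by positivity
  have hsq : (R*s)^2 < (R^2+Q^2)^2 := by
    rw [mul_pow, hs2]
    nlinarith [sq_nonneg Q, mul_pos hQ0 hQ0, sq_nonneg R, mul_pos hR0 hR0]
  have hRs : R*s < R^2+Q^2 := lt_of_pow_lt_pow_left₀ 2 hy.le hsq
  have hfin : 8*Q^2 < (2*P + 2*s - 1)^2 := by
    have h' : 2*P + 2*s - 1 = 2*s - 2*R := by linarith [h2P]
    rw [h']
    nlinarith [hRs, hs2]
  refine ⟨⟨hρPSD, hρtr⟩, ?_⟩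
  calc gd ρ ≤ 8*Q^2 := hgd
    _ < (2*P + 2*s - 1)^2 := hfin
    _ = negativity ρ ^ 2 := by rw [hneg]

end
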